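/- Let d ≥ 1 and t be a real number with t > d (playing the role of |m₀|). Define x_{0,k} = (-1)^k · C(d, 2k) · ∏_{l=1}^{k} (2l-1)/(t - d + 2l - 1) for 0 ≤ k ≤ d. Then the sequence {x_{0,k}} satisfies the fourth-order recurrence: -2(k+1)(t-d+2k+1)(t-d+2k-1) x_{0,k+1} + (2k(4d-6k+3) - d(d-1))(t-d+2k-1) x_{0,k} + [2(d-2k+2)(d(d-1) - (2k-2)(2d-2k+3)) + (2k-2)(t+d-2k+1)(t-d+2k-1)] x_{0,k-1} + (d-2k+4)(d-2k+3)(t+d-2k+3) x_{0,k-2} = 0 for all k with the convention x_{0,k} = 0 for k < 0 or k > d (and C(d, n) = 0 for n > d or n < 0). -/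

import Mathlib

lemma chooseR_aux (d j : ℕ) : (d.choose (j+1) : ℝ) * ((j:ℝ)+1) = (d.choose j : ℝ) * ((d:ℝ) - (j:ℝ)) := by
  rcases lt_or_ge j d with h | h
  · have hnat := Nat.choose_succ_right_eq d j
    have hc := congrArg (fun n : ℕ => (n : ℝ)) hnat
    push_cast [Nat.cast_sub h.le] at hc
    linear_combination hc
  · rcases eq_or_lt_of_le h with rfl | h'
    · simp [Nat.choose_succ_self]
    · rw [Nat.choose_eq_zero_of_lt h', Nat.choose_eq_zero_of_lt (by omega)]
      simp

lemma chooseR2_aux (d j : ℕ) : (d.choose (j+2) : ℝ) * ((j:ℝ)+2) * ((j:ℝ)+1)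
    = (d.choose j : ℝ) * ((d:ℝ) - (j:ℝ)) * ((d:ℝ) - (j:ℝ) - 1) := by
  have h1 := chooseR_aux d j
  have h2 := chooseR_aux d (j+1)
  push_cast at h2
  linear_combination ((j:ℝ)+1) * h2 + ((d:ℝ) - (j:ℝ) - 1) * h1

theorem stmt9 (d : ℕ) (hd : 1 ≤ d) (t : ℝ) (ht : (d : ℝ) < t)
    (x : ℤ → ℝ)
    (hx : ∀ k : ℤ, x k = if 0 ≤ k ∧ k ≤ (d : ℤ) then
      (-1 : ℝ) ^ (k.toNat) * (Nat.choose d (2 * k.toNat)) *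
        ∏ l ∈ Finset.Icc 1 k.toNat, (2 * (l : ℝ) - 1) / (t - (d : ℝ) + 2 * (l : ℝ) - 1)
      else 0) :
    ∀ k : ℤ,
      -2 * ((k : ℝ) + 1) * (t - (d : ℝ) + 2 * (k : ℝ) + 1) * (t - (d : ℝ) + 2 * (k : ℝ) - 1) *
          x (k + 1)
      + (2 * (k : ℝ) * (4 * (d : ℝ) - 6 * (k : ℝ) + 3) - (d : ℝ) * ((d : ℝ) - 1)) *
          (t - (d : ℝ) + 2 * (k : ℝ) - 1) * x k
      + (2 * ((d : ℝ) - 2 * (k : ℝ) + 2) *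
            ((d : ℝ) * ((d : ℝ) - 1) - (2 * (k : ℝ) - 2) * (2 * (d : ℝ) - 2 * (k : ℝ) + 3))
          + (2 * (k : ℝ) - 2) * (t + (d : ℝ) - 2 * (k : ℝ) + 1) *
            (t - (d : ℝ) + 2 * (k : ℝ) - 1)) * x (k - 1)
      + ((d : ℝ) - 2 * (k : ℝ) + 4) * ((d : ℝ) - 2 * (k : ℝ) + 3) *
          (t + (d : ℝ) - 2 * (k : ℝ) + 3) * x (k - 2)
      = 0 := by
  have htd : (0:ℝ) < t - d := by linarith
  have hxneg : ∀ j : ℤ, j < 0 → x j = 0 := by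
    intro j hj
    rw [hx j, if_neg (by omega)]
  have hxn : ∀ j : ℕ, x (j : ℤ) = (-1 : ℝ) ^ j * (Nat.choose d (2 * j)) *
      ∏ l ∈ Finset.Icc 1 j, (2 * (l : ℝ) - 1) / (t - (d : ℝ) + 2 * (l : ℝ) - 1) := by
    intro j
    rw [hx]
    split_ifs with h
    · simp [Int.toNat_natCast]
    · have hjd : d < j := by omega
      rw [Nat.choose_eq_zero_of_lt (by omega)]
      ring
  have hprod : ∀ j : ℕ,
      (∏ l ∈ Finset.Icc 1 (j+1), (2 * (l : ℝ) - 1) / (t - (d : ℝ) + 2 * (l : ℝ) - 1))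
      = (∏ l ∈ Finset.Icc 1 j, (2 * (l : ℝ) - 1) / (t - (d : ℝ) + 2 * (l : ℝ) - 1))
        * ((2 * (j : ℝ) + 1) / (t - (d : ℝ) + 2 * (j : ℝ) + 1)) := by
    intro j
    rw [Finset.prod_Icc_succ_top (Nat.succ_le_succ (Nat.zero_le j))]
    congr 1
    push_cast
    congr 1 <;> ring
  intro k
  rcases lt_or_ge k 0 with hk | hk
  · rcases eq_or_lt_of_le (by omega : k ≤ -1) with rfl | hk2
    · rw [hxneg (-1-1) (by omega), hxneg ((-1:ℤ)) (by omega), hxneg (-1-2) (by omega)]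
      push_cast
      ring
    · rw [hxneg (k+1) (by omega), hxneg k (by omega), hxneg (k-1) (by omega),
        hxneg (k-2) (by omega)]
      ring
  · obtain ⟨n, rfl⟩ := Int.eq_ofNat_of_zero_le hk
    match n with
    | 0 =>
      have e1 : ((0:ℕ) : ℤ) + 1 = ((1:ℕ) : ℤ) := by norm_num
      have hx1 := hxn 1
      have hx0 := hxn 0
      rw [e1, hxneg (((0:ℕ):ℤ) - 1) (by norm_num), hxneg (((0:ℕ):ℤ) - 2) (by norm_num)]
      push_cast
      simp only [Finset.Icc_self, Finset.prod_singleton, Nat.choose_zero_right,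
        Nat.mul_zero, Nat.mul_one, Finset.Icc_eq_empty (by norm_num : ¬ (1:ℕ) ≤ 0),
        Finset.prod_empty, pow_zero, pow_one, Nat.cast_one, mul_one, one_mul] at hx1 hx0
      push_cast at hx1 hx0
      rw [show t - (d:ℝ) + 2 - 1 = t - (d:ℝ) + 1 by ring] at hx1
      have hne : t - (d:ℝ) + 1 ≠ 0 := by linarith
      have h1 : x 1 * (t - (d:ℝ) + 1) = -(d.choose 2 : ℝ) := by
        rw [hx1]; field_simp
        ring
      have hb := chooseR2_aux d 0
      norm_num at hb
      apply mul_left_cancel₀ hne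
      linear_combination (-2 * (t-(d:ℝ)+1) * (t-(d:ℝ)-1)) * h1
        + ((0 - (d:ℝ)*((d:ℝ)-1)) * (t-(d:ℝ)-1) * (t-(d:ℝ)+1)) * hx0
        + ((t-(d:ℝ)+1) * (t-(d:ℝ)-1)) * hb
    | 1 =>
      have e1 : ((1:ℕ) : ℤ) + 1 = ((2:ℕ) : ℤ) := by norm_num
      have e2 : ((1:ℕ) : ℤ) - 1 = ((0:ℕ) : ℤ) := by norm_num
      have hx2 := hxn 2
      have hx1 := hxn 1
      have hx0 := hxn 0
      have p2 := hprod 1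
      rw [show (1:ℕ)+1 = 2 from rfl] at p2
      rw [p2] at hx2
      rw [e1, e2, hxneg (((1:ℕ):ℤ) - 2) (by norm_num)]
      simp only [Finset.Icc_self, Finset.prod_singleton, Nat.choose_zero_right,
        Nat.mul_zero, Nat.mul_one, Nat.cast_one, Finset.Icc_eq_empty
          (by norm_num : ¬ (1:ℕ) ≤ 0), Finset.prod_empty,
        pow_zero, pow_one, mul_one, one_mul] at hx2 hx1 hx0
      push_cast at hx2 hx1 hx0 ⊢
      rw [show t - (d:ℝ) + 2 - 1 = t - (d:ℝ) + 1 by ring] at hx2 hx1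
      rw [show t - (d:ℝ) + 2 + 1 = t - (d:ℝ) + 3 by ring] at hx2
      have hne1 : t - (d:ℝ) + 1 ≠ 0 := by linarith
      have hne2 : t - (d:ℝ) + 3 ≠ 0 := by linarith
      have h2 : x 2 * ((t - (d:ℝ) + 1) * (t - (d:ℝ) + 3)) = 3 * (d.choose 4 : ℝ) := by
        rw [hx2]; field_simp; ring
      have h1 : x 1 * (t - (d:ℝ) + 1) = -(d.choose 2 : ℝ) := by
        rw [hx1]; field_simp
        ring
      have hb := chooseR2_aux d 0
      have hc := chooseR2_aux d 2
      norm_num at hb hc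
      apply mul_left_cancel₀ hne1
      linear_combination (-4 * (t-(d:ℝ)+1)) * h2
        + ((2*(4*(d:ℝ)-3) - (d:ℝ)*((d:ℝ)-1)) * (t-(d:ℝ)+1)) * h1
        + ((2*(d:ℝ)*((d:ℝ)*((d:ℝ)-1))) * (t-(d:ℝ)+1)) * hx0
        + (-(t-(d:ℝ)+1)) * hc
        + (-2*(d:ℝ)*(t-(d:ℝ)+1)) * hb
    | (m+2) =>
      have e1 : ((m+2:ℕ) : ℤ) + 1 = ((m+3:ℕ) : ℤ) := by push_cast; ring
      have e2 : ((m+2:ℕ) : ℤ) - 1 = ((m+1:ℕ) : ℤ) := by push_cast; ring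
      have e3 : ((m+2:ℕ) : ℤ) - 2 = ((m:ℕ) : ℤ) := by push_cast; ring
      rw [e1, e2, e3]
      obtain ⟨Q, hQ⟩ : ∃ q : ℝ, q = ∏ l ∈ Finset.Icc 1 m,
          (2 * (l : ℝ) - 1) / (t - (d : ℝ) + 2 * (l : ℝ) - 1) := ⟨_, rfl⟩
      have p1 := hprod m
      have p2 := hprod (m+1)
      have p3 := hprod (m+2)
      rw [show m+1+1 = m+2 from rfl] at p2
      rw [show m+2+1 = m+3 from rfl] at p3
      push_cast at p2 p3
      rw [show 2*((m:ℝ)+1)+1 = 2*(m:ℝ)+3 by ring,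
        show t - (d:ℝ) + 2*((m:ℝ)+1) + 1 = t - (d:ℝ) + 2*(m:ℝ)+3 by ring] at p2
      rw [show 2*((m:ℝ)+2)+1 = 2*(m:ℝ)+5 by ring,
        show t - (d:ℝ) + 2*((m:ℝ)+2) + 1 = t - (d:ℝ) + 2*(m:ℝ)+5 by ring] at p3
      have hx3 := hxn (m+3)
      have hx2 := hxn (m+2)
      have hx1 := hxn (m+1)
      have hx0 := hxn m
      rw [p3, p2, p1, ← hQ] at hx3
      rw [p2, p1, ← hQ] at hx2
      rw [p1, ← hQ] at hx1
      rw [← hQ] at hx0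
      rw [show (2*(m+3)) = 2*m+6 from by ring] at hx3
      rw [show (2*(m+2)) = 2*m+4 from by ring] at hx2
      rw [show (2*(m+1)) = 2*m+2 from by ring] at hx1
      push_cast at hx3 hx2 hx1 hx0 ⊢
      have hm0 : (0:ℝ) ≤ (m:ℝ) := Nat.cast_nonneg m
      have hne1 : t - (d:ℝ) + 2*(m:ℝ) + 1 ≠ 0 := by positivity
      have hne2 : t - (d:ℝ) + 2*(m:ℝ) + 3 ≠ 0 := by positivity
      have hne3 : t - (d:ℝ) + 2*(m:ℝ) + 5 ≠ 0 := by positivity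
      have h3 : x ((m:ℤ)+3) * ((t-(d:ℝ)+2*(m:ℝ)+1) * (t-(d:ℝ)+2*(m:ℝ)+3) * (t-(d:ℝ)+2*(m:ℝ)+5))
          = -((-1:ℝ)^m) * (d.choose (2*m+6) : ℝ) * Q
            * ((2*(m:ℝ)+1)*(2*(m:ℝ)+3)*(2*(m:ℝ)+5)) := by
        rw [hx3]; field_simp; ring
      have h2 : x ((m:ℤ)+2) * ((t-(d:ℝ)+2*(m:ℝ)+1) * (t-(d:ℝ)+2*(m:ℝ)+3))
          = (-1:ℝ)^m * (d.choose (2*m+4) : ℝ) * Q * ((2*(m:ℝ)+1)*(2*(m:ℝ)+3)) := by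
        rw [hx2]; field_simp; ring
      have h1 : x ((m:ℤ)+1) * (t-(d:ℝ)+2*(m:ℝ)+1)
          = -((-1:ℝ)^m) * (d.choose (2*m+2) : ℝ) * Q * (2*(m:ℝ)+1) := by
        rw [hx1]; field_simp; ring
      have hb := chooseR2_aux d (2*m)
      have hc := chooseR2_aux d (2*m+2)
      have he := chooseR2_aux d (2*m+4)
      rw [show (2*m+2+2) = 2*m+4 from by ring] at hc
      rw [show (2*m+4+2) = 2*m+6 from by ring] at he
      push_cast at hb hc he
      apply mul_left_cancel₀ hne1
      linear_combination (-2*((m:ℝ)+3)) * h3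
        + (2*((m:ℝ)+2)*(4*(d:ℝ)-6*((m:ℝ)+2)+3) - (d:ℝ)*((d:ℝ)-1)) * h2
        + (2*((d:ℝ)-2*(m:ℝ)-2)*((d:ℝ)*((d:ℝ)-1)-(2*(m:ℝ)+2)*(2*(d:ℝ)-2*(m:ℝ)-1))
            + (2*(m:ℝ)+2)*(t+(d:ℝ)-2*(m:ℝ)-3)*(t-(d:ℝ)+2*(m:ℝ)+3)) * h1
        + (((d:ℝ)-2*(m:ℝ))*((d:ℝ)-2*(m:ℝ)-1)*(t+(d:ℝ)-2*(m:ℝ)-1)*(t-(d:ℝ)+2*(m:ℝ)+1)) * hx0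
        + ((-1:ℝ)^m*Q) * ((2*(m:ℝ)+1)*(2*(m:ℝ)+3)) * he
        + ((-1:ℝ)^m*Q) * (2*(2*(m:ℝ)+1)*((d:ℝ)-2*(m:ℝ)-2)) * hc
        + (-((-1:ℝ)^m*Q) * (t+(d:ℝ)-2*(m:ℝ)-1)*(t-(d:ℝ)+2*(m:ℝ)+1)) * hb
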